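/- The subsemimodule P = {(0,0), (0,1), (1,1)} of the free 𝔹-semimodule 𝔹² is a finitely generated projective 𝔹-semimodule that is not strongly projective. -/

import Mathlib

/-- The Boolean semifield `𝔹 = ({0,1}, max, min)`. -/
inductive Bsf : Type
  | zero
  | one
  deriving DecidableEq

instance : Fintype Bsf := ⟨{.zero, .one}, fun x => by cases x <;> decide⟩

instance : Zero Bsf := ⟨.zero⟩
instance : One Bsf := ⟨.one⟩
instance : Add Bsf := ⟨fun a b => match a, b with | .zero, x => x | .one, _ => .one⟩
instance : Mul Bsf := ⟨fun a b => match a, b with | .zero, _ => .zero | .one, x => x⟩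

instance : CommSemiring Bsf where
  nsmul := nsmulRec
  add_assoc := by decide
  zero_add := by decide
  add_zero := by decide
  add_comm := by decide
  mul_assoc := by decide
  one_mul := by decide
  mul_one := by decide
  left_distrib := by decide
  right_distrib := by decide
  zero_mul := by decide
  mul_zero := by decide
  mul_comm := by decide

/-- `p` and `q` decompose `M` as an (internal) direct sum. -/
def IsSummandDecomp {S M : Type} [Semiring S] [AddCommMonoid M] [Module S M]
    (p q : Submodule S M) : Prop :=
  Function.Bijective fun ab : p × q => (ab.1 : M) + (ab.2 : M)

/-- A semimodule is strongly projective if it is isomorphic to a direct summand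
of a free semimodule. -/
def StronglyProjective (S P : Type) [Semiring S] [AddCommMonoid P] [Module S P] : Prop :=
  ∃ (ι : Type) (p q : Submodule S (ι →₀ S)), IsSummandDecomp p q ∧ Nonempty (P ≃ₗ[S] p)

/-- The subsemimodule `{(0,0), (0,1), (1,1)}` of the free `𝔹`-semimodule `𝔹²`. -/
def Pex : Submodule Bsf (Bsf × Bsf) where
  carrier := {x | x = (0, 0) ∨ x = (0, 1) ∨ x = (1, 1)}
  add_mem' := by
    intro a b ha hb
    simp only [Set.mem_setOf_eq] at ha hb ⊢
    rcases a with ⟨a1, a2⟩; rcases b with ⟨b1, b2⟩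
    rcases a1 <;> rcases a2 <;> rcases b1 <;> rcases b2 <;> revert ha hb <;> decide
  zero_mem' := Or.inl rfl
  smul_mem' := by
    intro c x hx
    simp only [Set.mem_setOf_eq] at hx ⊢
    rcases x with ⟨x1, x2⟩
    rcases c <;> rcases x1 <;> rcases x2 <;> revert hx <;> decide


section Aux

lemma bsf_add_zero_left {x y : Bsf} (h : x + y = 0) : x = 0 := by
  revert h; rcases x <;> rcases y <;> decide

lemma bsf_ne_zero {x : Bsf} (h : x ≠ 0) : x = 1 := by
  revert h; rcases x <;> decide

/-- The retraction `𝔹² → P`, `(a, b) ↦ (a, a + b)`. -/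
def PexRetr : (Bsf × Bsf) →ₗ[Bsf] Pex where
  toFun x := ⟨(x.1, x.1 + x.2), by
    rcases x with ⟨a, b⟩
    rcases a <;> rcases b <;>
      first
        | exact Or.inl rfl
        | exact Or.inr (Or.inl rfl)
        | exact Or.inr (Or.inr rfl)⟩
  map_add' := by
    intro x y
    apply Subtype.ext
    rcases x with ⟨a, b⟩; rcases y with ⟨c, d⟩
    rcases a <;> rcases b <;> rcases c <;> rcases d <;> decide
  map_smul' := by
    intro c x
    apply Subtype.ext
    rcases x with ⟨a, b⟩
    rcases c <;> rcases a <;> rcases b <;> decide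

lemma Pex_not_stronglyProjective : ¬ StronglyProjective Bsf Pex := by
  rintro ⟨ι, p, q, hbij, ⟨f⟩⟩
  classical
  set M := ι →₀ Bsf
  have hu : ((0, 1) : Bsf × Bsf) ∈ Pex := Or.inr (Or.inl rfl)
  have hv : ((1, 1) : Bsf × Bsf) ∈ Pex := Or.inr (Or.inr rfl)
  set u : Pex := ⟨(0, 1), hu⟩
  set v : Pex := ⟨(1, 1), hv⟩
  set a : M := (f u : M) with ha_def
  set b : M := (f v : M) with hb_def
  have huv : u + v = v := by
    apply Subtype.ext
    show ((0, 1) : Bsf × Bsf) + (1, 1) = (1, 1)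
    decide
  have hab : a + b = b := by
    have : f u + f v = f v := by rw [← map_add, huv]
    calc a + b = ((f u + f v : p) : M) := rfl
    _ = b := by rw [this]
  have hne : a ≠ b := by
    intro h
    have : f u = f v := Subtype.ext h
    have : u = v := f.injective this
    have h2 : ((0, 1) : Bsf × Bsf) = (1, 1) := congrArg Subtype.val this
    exact absurd h2 (by decide)
  have ha0 : a ≠ 0 := by
    intro h
    have : f u = f 0 := by rw [map_zero]; exact Subtype.ext h
    have : u = (0 : Pex) := f.injective this
    have h2 : ((0, 1) : Bsf × Bsf) = (0, 0) := congrArg Subtype.val this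
    exact absurd h2 (by decide)
  -- `p` has only the three elements `0`, `a`, `b`
  have hp3 : ∀ x : p, (x : M) = 0 ∨ (x : M) = a ∨ (x : M) = b := by
    intro x
    obtain ⟨w, hw⟩ := f.surjective x
    rcases w.2 with h | h | h
    · left
      have : w = 0 := Subtype.ext h
      rw [← hw, this, map_zero]; rfl
    · right; left
      have : w = u := Subtype.ext h
      rw [← hw, this]
    · right; right
      have : w = v := Subtype.ext h
      rw [← hw, this]
  have habj : ∀ j, a j + b j = b j := by
    intro j
    have := DFunLike.congr_fun hab j
    rwa [Finsupp.add_apply] at this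
  -- singletons in the "gap" between `a` and `b` must lie in `q`
  have hsingle : ∀ j : ι, a j = 0 → b j ≠ 0 → Finsupp.single j (1 : Bsf) ∈ q := by
    intro j haj hbj
    obtain ⟨⟨x, y⟩, hxy⟩ := hbij.2 (Finsupp.single j (1 : Bsf))
    simp only at hxy
    obtain ⟨i, hi⟩ : ∃ i, a i ≠ 0 := by
      by_contra h
      push_neg at h
      exact ha0 (Finsupp.ext h)
    have hij : i ≠ j := fun h => hi (h ▸ haj)
    rcases hp3 x with hx | hx | hx
    · have : (y : M) = Finsupp.single j 1 := by rw [← hxy, hx, zero_add]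
      exact this ▸ y.2
    · exfalso
      have h1 := DFunLike.congr_fun hxy i
      rw [Finsupp.add_apply, hx, Finsupp.single_apply, if_neg (Ne.symm hij)] at h1
      exact hi (bsf_add_zero_left h1)
    · exfalso
      have hbi : b i ≠ 0 := by
        intro h
        have := habj i
        rw [h] at this
        exact hi (bsf_add_zero_left this)
      have h1 := DFunLike.congr_fun hxy i
      rw [Finsupp.add_apply, hx, Finsupp.single_apply, if_neg (Ne.symm hij)] at h1
      exact hbi (bsf_add_zero_left h1)
  -- the "difference" of `b` and `a`
  set y0 : M := Finsupp.filter (fun j => a j = 0) b with hy0_def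
  have hy0_apply : ∀ j, y0 j = if a j = 0 then b j else 0 := fun j =>
    Finsupp.filter_apply _ _ j
  have hy0q : y0 ∈ q := by
    rw [← Finsupp.sum_single y0]
    apply Submodule.sum_mem
    intro j hj
    have hj' : y0 j ≠ 0 := Finsupp.mem_support_iff.mp hj
    have haj : a j = 0 := by
      by_contra h
      rw [hy0_apply j, if_neg h] at hj'
      exact hj' rfl
    have hbj : b j ≠ 0 := by
      intro h
      rw [hy0_apply j, if_pos haj, h] at hj'
      exact hj' rfl
    have : y0 j = 1 := bsf_ne_zero hj'
    rw [this]
    exact hsingle j haj hbj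
  have hay0 : a + y0 = b := by
    ext j
    rw [Finsupp.add_apply, hy0_apply j]
    by_cases h : a j = 0
    · rw [if_pos h, h, zero_add]
    · rw [if_neg h, add_zero, bsf_ne_zero h]
      have := habj j
      rw [bsf_ne_zero h] at this
      rw [← this]
      rcases (b j) <;> decide
  -- two distinct decompositions of `b`, contradicting injectivity
  have hinj := hbij.1 (a₁ := (f v, ⟨0, q.zero_mem⟩)) (a₂ := (f u, ⟨y0, hy0q⟩))
    (by simp only; rw [add_zero, ← ha_def, ← hb_def, hay0])
  have : f v = f u := congrArg Prod.fst hinj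
  exact hne (congrArg Subtype.val this).symm

end Aux

/-- The subsemimodule `{(0,0), (0,1), (1,1)} ⊆ 𝔹²` is a finitely generated projective
`𝔹`-semimodule which is not strongly projective. -/
theorem Pex_projective_not_stronglyProjective :
    Module.Finite Bsf Pex ∧ Module.Projective Bsf Pex ∧ ¬ StronglyProjective Bsf Pex := by
  refine ⟨Module.Finite.of_finite, ?_, Pex_not_stronglyProjective⟩
  apply Module.Projective.of_split Pex.subtype PexRetr
  apply LinearMap.ext
  rintro ⟨x, hx⟩
  apply Subtype.ext
  rcases hx with h | h | h <;> subst h <;> decide
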